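/- Let X be a real normed space whose unit sphere is nonempty. If the dual space X* has the weak* symmetric strong diameter 2 property, then X is decomposably octahedral. -/
import Mathlib


/-- A real normed space `X` is decomposably octahedral (DOH) if for every finite subset `E`
of the unit sphere and every `ε > 0` there exists `y` in the unit sphere such that for every
decomposition `y = y₁ + ⋯ + yₙ`, all `x₁, …, xₙ ∈ E` and nonnegative reals `aᵢ, bᵢ`,
`∑ (‖aᵢ xᵢ + yᵢ‖ + ‖bᵢ xᵢ − yᵢ‖) ≥ (1 − ε)(∑ (aᵢ + bᵢ) + 2)`. -/
def DecomposablyOctahedral (X : Type*) [NormedAddCommGroup X] [NormedSpace ℝ X] : Prop :=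
  ∀ E : Finset X, (∀ x ∈ E, ‖x‖ = 1) → ∀ ε : ℝ, 0 < ε → ∃ y : X, ‖y‖ = 1 ∧
    ∀ (n : ℕ) (ys : Fin n → X), ∑ i, ys i = y →
      ∀ xs : Fin n → X, (∀ i, xs i ∈ E) →
      ∀ a b : Fin n → ℝ, (∀ i, 0 ≤ a i) → (∀ i, 0 ≤ b i) →
        (1 - ε) * ((∑ i, (a i + b i)) + 2) ≤
          ∑ i, (‖a i • xs i + ys i‖ + ‖b i • xs i - ys i‖)

/-- The dual of `X` has the weak* symmetric strong diameter 2 property: for every finite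
family of weak* slices `Sᵢ = {f ∈ B_{X*} : f xᵢ > 1 − αᵢ}` (with `xᵢ` in the unit sphere and
`αᵢ > 0`) and every `ε > 0`, there are `fᵢ ∈ Sᵢ` and `g ∈ B_{X*}` with `fᵢ ± g ∈ Sᵢ` for
every `i` and `‖g‖ > 1 − ε`. -/
def WeakStarSSD2P (X : Type*) [NormedAddCommGroup X] [NormedSpace ℝ X] : Prop :=
  ∀ (n : ℕ) (x : Fin n → X), (∀ i, ‖x i‖ = 1) →
    ∀ α : Fin n → ℝ, (∀ i, 0 < α i) → ∀ ε : ℝ, 0 < ε →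
      ∃ (f : Fin n → (X →L[ℝ] ℝ)) (g : X →L[ℝ] ℝ),
        (∀ i, ‖f i‖ ≤ 1 ∧ 1 - α i < f i (x i)) ∧
        (∀ i, ‖f i + g‖ ≤ 1 ∧ 1 - α i < (f i + g) (x i)) ∧
        (∀ i, ‖f i - g‖ ≤ 1 ∧ 1 - α i < (f i - g) (x i)) ∧
        ‖g‖ ≤ 1 ∧ 1 - ε < ‖g‖

theorem doh_of_weakStarSSD2P (X : Type*) [NormedAddCommGroup X] [NormedSpace ℝ X]
    (hX : ∃ x : X, ‖x‖ = 1) (h : WeakStarSSD2P X) : DecomposablyOctahedral X := by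
  intro E hE ε hε
  -- a convenient small parameter
  set ε' : ℝ := min ε 1 / 2 with hε'def
  have hε'pos : 0 < ε' := by
    have : 0 < min ε 1 := lt_min hε one_pos
    positivity
  have hε'le : ε' ≤ ε := by
    have h1 : min ε 1 ≤ ε := min_le_left _ _
    have : 0 < ε := hε
    simp only [hε'def]; linarith
  have hε'half : ε' ≤ 1 / 2 := by
    have h1 : min ε 1 ≤ 1 := min_le_right _ _
    simp only [hε'def]; linarith
  -- enumerate E
  set m := E.card with hm
  set xE : Fin m → X := fun i => ((E.equivFin.symm i : E) : X) with hxE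
  have hxEnorm : ∀ i, ‖xE i‖ = 1 := fun i => hE _ (E.equivFin.symm i).2
  obtain ⟨f, g, hf, hfp, hfm, hg1, hg2⟩ :=
    h m xE hxEnorm (fun _ => ε') (fun _ => hε'pos) ε' hε'pos
  -- find a norm-one y with g y > 1 - ε'
  have hgε : (1 : ℝ) - ε' < ‖g‖ := hg2
  obtain ⟨z, hz1, hz2⟩ := g.exists_lt_apply_of_lt_opNorm hgε
  rw [Real.norm_eq_abs] at hz2
  have hgz_pos : 0 < |g z| := lt_of_le_of_lt (by linarith) hz2
  -- replace z by ±z so that g z > 1 - ε'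
  obtain ⟨w, hw1, hw2⟩ : ∃ w : X, ‖w‖ < 1 ∧ 1 - ε' < g w := by
    rcases le_or_gt 0 (g z) with hz0 | hz0
    · exact ⟨z, hz1, by rwa [abs_of_nonneg hz0] at hz2⟩
    · refine ⟨-z, by simpa using hz1, ?_⟩
      rw [map_neg]
      rwa [abs_of_neg hz0] at hz2
  have hgw_pos : 0 < g w := lt_of_le_of_lt (by linarith) hw2
  have hw_ne : w ≠ 0 := by
    intro hw0; rw [hw0, map_zero] at hgw_pos; exact lt_irrefl _ hgw_pos
  have hwnorm_pos : 0 < ‖w‖ := norm_pos_iff.mpr hw_ne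
  set y : X := ‖w‖⁻¹ • w with hy_def
  have hynorm : ‖y‖ = 1 := by
    rw [hy_def, norm_smul, norm_inv, norm_norm, inv_mul_cancel₀ hwnorm_pos.ne']
  have hgy : 1 - ε' < g y := by
    have : g y = ‖w‖⁻¹ * g w := by rw [hy_def, map_smul]; simp
    rw [this]
    have h1 : (1 : ℝ) ≤ ‖w‖⁻¹ := by
      rw [le_inv_comm₀ one_pos hwnorm_pos]
      simpa using hw1.le
    calc 1 - ε' < g w := hw2
      _ = 1 * g w := (one_mul _).symm
      _ ≤ ‖w‖⁻¹ * g w := by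
          exact mul_le_mul_of_nonneg_right h1 hgw_pos.le
  refine ⟨y, hynorm, ?_⟩
  intro n ys hys xs hxs a b ha hb
  -- index of xs j in the enumeration
  have hx_eq : ∀ j : Fin n, xE (E.equivFin ⟨xs j, hxs j⟩) = xs j := by
    intro j
    simp [hxE]
  set idx : Fin n → Fin m := fun j => E.equivFin ⟨xs j, hxs j⟩ with hidx
  -- termwise lower bounds
  have hA : ∀ j : Fin n,
      a j * (1 - ε) + (f (idx j)) (ys j) + g (ys j) ≤ ‖a j • xs j + ys j‖ := by
    intro j
    have hxj : (f (idx j) + g) (xs j) > 1 - ε' := by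
      have := (hfp (idx j)).2
      rwa [hx_eq j] at this
    have happ : (f (idx j) + g) (a j • xs j + ys j)
        = a j * (f (idx j) + g) (xs j) + (f (idx j)) (ys j) + g (ys j) := by
      simp [map_add, map_smul, smul_eq_mul]; ring
    have hle : (f (idx j) + g) (a j • xs j + ys j) ≤ ‖a j • xs j + ys j‖ := by
      calc (f (idx j) + g) (a j • xs j + ys j)
          ≤ ‖(f (idx j) + g) (a j • xs j + ys j)‖ := le_abs_self _
        _ ≤ ‖f (idx j) + g‖ * ‖a j • xs j + ys j‖ :=
            ContinuousLinearMap.le_opNorm _ _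
        _ ≤ 1 * ‖a j • xs j + ys j‖ :=
            mul_le_mul_of_nonneg_right (hfp (idx j)).1 (norm_nonneg _)
        _ = ‖a j • xs j + ys j‖ := one_mul _
    have haux : a j * (1 - ε) ≤ a j * (f (idx j) + g) (xs j) :=
      mul_le_mul_of_nonneg_left (by linarith [hxj, hε'le]) (ha j)
    linarith [happ ▸ hle]
  have hB : ∀ j : Fin n,
      b j * (1 - ε) - (f (idx j)) (ys j) + g (ys j) ≤ ‖b j • xs j - ys j‖ := by
    intro j
    have hxj : (f (idx j) - g) (xs j) > 1 - ε' := by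
      have := (hfm (idx j)).2
      rwa [hx_eq j] at this
    have happ : (f (idx j) - g) (b j • xs j - ys j)
        = b j * (f (idx j) - g) (xs j) - (f (idx j)) (ys j) + g (ys j) := by
      simp [map_sub, map_smul, smul_eq_mul]; ring
    have hle : (f (idx j) - g) (b j • xs j - ys j) ≤ ‖b j • xs j - ys j‖ := by
      calc (f (idx j) - g) (b j • xs j - ys j)
          ≤ ‖(f (idx j) - g) (b j • xs j - ys j)‖ := le_abs_self _
        _ ≤ ‖f (idx j) - g‖ * ‖b j • xs j - ys j‖ :=
            ContinuousLinearMap.le_opNorm _ _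
        _ ≤ 1 * ‖b j • xs j - ys j‖ :=
            mul_le_mul_of_nonneg_right (hfm (idx j)).1 (norm_nonneg _)
        _ = ‖b j • xs j - ys j‖ := one_mul _
    have haux : b j * (1 - ε) ≤ b j * (f (idx j) - g) (xs j) :=
      mul_le_mul_of_nonneg_left (by linarith [hxj, hε'le]) (hb j)
    linarith [happ ▸ hle]
  -- sum it up
  have hsum : ∑ j, (a j * (1 - ε) + b j * (1 - ε) + 2 * g (ys j))
      ≤ ∑ j, (‖a j • xs j + ys j‖ + ‖b j • xs j - ys j‖) := by
    apply Finset.sum_le_sum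
    intro j _
    linarith [hA j, hB j]
  have hgy_sum : ∑ j, g (ys j) = g y := by
    rw [← map_sum, hys]
  have hsum_split : ∑ j, (a j * (1 - ε) + b j * (1 - ε) + 2 * g (ys j))
      = (1 - ε) * (∑ j, (a j + b j)) + 2 * g y := by
    rw [Finset.sum_add_distrib, ← Finset.mul_sum, ← hgy_sum, Finset.mul_sum, Finset.mul_sum]
    congr 1
    apply Finset.sum_congr rfl
    intro j _
    ring
  have hgy' : 1 - ε ≤ g y := by linarith [hgy, hε'le]
  calc (1 - ε) * ((∑ i, (a i + b i)) + 2)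
      = (1 - ε) * (∑ i, (a i + b i)) + 2 * (1 - ε) := by ring
    _ ≤ (1 - ε) * (∑ i, (a i + b i)) + 2 * g y := by linarith
    _ = ∑ j, (a j * (1 - ε) + b j * (1 - ε) + 2 * g (ys j)) := hsum_split.symm
    _ ≤ _ := hsum
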